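/- Let $f\in\ell^2(\mathbb{N}^p)$ and $g\in\ell^2(\mathbb{N}^q)$ be symmetric and vanishing on diagonals. Let $\Delta_{p+q}\subset\mathbb{N}^{p+q}$ be the set of tuples with pairwise distinct entries and define the maximal influence $\mathcal{M}(f):=\sup_k \sum_{i_1,\dots,i_{p-1}} f(i_1,\dots,i_{p-1},k)^2$. Then $\|\widetilde{f\otimes g}\,\mathbf{1}_{\Delta_{p+q}^c}\|^2_{\ell^2(\mathbb{N}^{p+q})} \le \sum_{r=1}^{p\wedge q} r!\binom{p}{r}\binom{q}{r}\min\{\|f\|^2\,\mathcal{M}(g),\ \|g\|^2\,\mathcal{M}(f)\}$. -/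

import Mathlib

open MeasureTheory ProbabilityTheory

namespace RademacherPT

open Function
open scoped ENNReal

/-- Glue a `(p-r)`-tuple and an `r`-tuple into a `p`-tuple. -/
noncomputable def glue {p r : ℕ} (i : Fin (p - r) → ℕ) (k : Fin r → ℕ) : Fin p → ℕ :=
  fun m => if h : (m : ℕ) < p - r then i ⟨m, h⟩
    else k ⟨(m : ℕ) - (p - r), by have := m.isLt; omega⟩

/-- The `r`-th contraction of two kernels. -/
noncomputable def contraction {p q : ℕ} (r : ℕ) (f : (Fin p → ℕ) → ℝ) (g : (Fin q → ℕ) → ℝ) :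
    (Fin (p - r) → ℕ) × (Fin (q - r) → ℕ) → ℝ :=
  fun x => ∑' k : Fin r → ℕ, f (glue x.1 k) * g (glue x.2 k)

/-- Canonical symmetrization of a kernel. -/
noncomputable def symmetrization {p : ℕ} (h : (Fin p → ℕ) → ℝ) : (Fin p → ℕ) → ℝ :=
  fun i => (p.factorial : ℝ)⁻¹ * ∑ σ : Equiv.Perm (Fin p), h (i ∘ σ)

/-- Tensor product of two kernels. -/
noncomputable def tensorProd {p q : ℕ} (f : (Fin p → ℕ) → ℝ) (g : (Fin q → ℕ) → ℝ) :
    (Fin (p + q) → ℕ) → ℝ :=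
  fun i => f (fun a => i (Fin.castAdd q a)) * g (fun b => i (Fin.natAdd p b))

/-- Maximal influence of a kernel. -/
noncomputable def maxInfluence {p : ℕ} (f : (Fin p → ℕ) → ℝ) : ℝ :=
  ⨆ k : ℕ, ∑' i : Fin (p - 1) → ℕ, (f (glue (r := 1) i (fun _ => k)))^2

/-- A kernel is symmetric. -/
def IsSymm {p : ℕ} (f : (Fin p → ℕ) → ℝ) : Prop :=
  ∀ (σ : Equiv.Perm (Fin p)) (i : Fin p → ℕ), f (i ∘ σ) = f i

/-- A kernel vanishes on diagonals. -/
def VanishOnDiag {p : ℕ} (f : (Fin p → ℕ) → ℝ) : Prop :=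
  ∀ i : Fin p → ℕ, ¬ Function.Injective i → f i = 0

private lemma tsum_comp_perm {n : ℕ} (u : (Fin n → ℕ) → ℝ≥0∞) (σ : Equiv.Perm (Fin n)) :
    ∑' i : Fin n → ℕ, u (i ∘ σ) = ∑' i, u i := by
  rw [← (Equiv.arrowCongr σ.symm (Equiv.refl ℕ)).tsum_eq u]
  refine tsum_congr fun i => congrArg u ?_
  funext m
  simp [Equiv.arrowCongr]
private lemma glue_injective {q : ℕ} (hq : 0 < q) (k : ℕ) :
    Injective (fun j : Fin (q-1) → ℕ => glue (p := q) (r := 1) j (fun _ => k)) := by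
  intro j j' h
  funext t
  have ht : (t : ℕ) < q := by have := t.isLt; omega
  have h2 := congrFun h ⟨t, ht⟩
  simpa [glue, t.isLt] using h2
private lemma maxInfluence_nonneg {q : ℕ} (g : (Fin q → ℕ) → ℝ) : 0 ≤ maxInfluence g :=
  Real.iSup_nonneg fun _ => tsum_nonneg fun _ => sq_nonneg _
private lemma slice_le {q : ℕ} (g : (Fin q → ℕ) → ℝ) (hg : IsSymm g)
    (hgs : Summable fun j => (g j)^2) (n : Fin q) (k : ℕ) :
    (∑' b : Fin q → ℕ, if b n = k then ENNReal.ofReal ((g b)^2) else 0)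
      ≤ ENNReal.ofReal (maxInfluence g) := by
  have hq : 0 < q := n.pos
  set last : Fin q := ⟨q - 1, by omega⟩ with hlast
  set u : (Fin q → ℕ) → ℝ≥0∞ := fun b => if b last = k then ENNReal.ofReal ((g b)^2) else 0 with hu
  have step1 : (∑' b : Fin q → ℕ, if b n = k then ENNReal.ofReal ((g b)^2) else 0)
      = ∑' b, u b := by
    rw [← tsum_comp_perm u (Equiv.swap n last)]
    refine tsum_congr fun b => ?_
    have h1 : (b ∘ (Equiv.swap n last)) last = b n := by
      simp [Equiv.swap_apply_right]
    rw [hu]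
    simp only [h1, hg (Equiv.swap n last) b]
  -- the product equiv
  have hlt : ∀ t : Fin (q-1), (t : ℕ) < q := fun t => by have := t.isLt; omega
  set ψ : ((Fin (q-1) → ℕ) × ℕ) ≃ (Fin q → ℕ) :=
    { toFun := fun x => glue (p := q) (r := 1) x.1 (fun _ => x.2)
      invFun := fun b => (fun t => b ⟨t, hlt t⟩, b last)
      left_inv := by
        rintro ⟨j, x⟩
        refine Prod.ext ?_ ?_
        · funext t
          simp [glue, t.isLt]
        · simp [glue, hlast]
      right_inv := by
        intro b
        funext m
        by_cases h : (m : ℕ) < q - 1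
        · simp only [glue, dif_pos h]
        · simp only [glue, dif_neg h]
          congr 1
          exact Fin.ext (by have := m.isLt; simp [hlast]; omega) } with hψ
  have hψlast : ∀ x : (Fin (q-1) → ℕ) × ℕ, ψ x last = x.2 := by
    rintro ⟨j, x⟩
    simp [hψ, glue, hlast]
  have step2 : ∑' b, u b =
      ∑' j : Fin (q-1) → ℕ, ENNReal.ofReal ((g (glue (r := 1) j (fun _ => k)))^2) := by
    rw [← ψ.tsum_eq u, ENNReal.tsum_prod']
    refine tsum_congr fun j => ?_
    rw [tsum_eq_single k]
    · rw [hu]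
      simp only [hψlast ⟨j, k⟩, if_pos rfl]
      rfl
    · intro x hx
      rw [hu]
      simp only [hψlast ⟨j, x⟩]
      exact if_neg hx
  rw [step1, step2]
  have hsum : Summable (fun j : Fin (q-1) → ℕ => (g (glue (r := 1) j (fun _ => k)))^2) :=
    hgs.comp_injective (glue_injective hq k)
  rw [← ENNReal.ofReal_tsum_of_nonneg (fun j => sq_nonneg _) hsum]
  apply ENNReal.ofReal_le_ofReal
  have hbdd : BddAbove (Set.range fun k' : ℕ =>
      ∑' j : Fin (q-1) → ℕ, (g (glue (r := 1) j (fun _ => k')))^2) := by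
    refine ⟨∑' b, (g b)^2, ?_⟩
    rintro _ ⟨k', rfl⟩
    exact tsum_comp_le_tsum_of_inj hgs (fun b => sq_nonneg _) (glue_injective hq k')
  exact le_ciSup hbdd k

private lemma keybound {p q : ℕ} (f : (Fin p → ℕ) → ℝ) (g : (Fin q → ℕ) → ℝ)
    (hg : IsSymm g) (hfs : Summable fun i => (f i)^2) (hgs : Summable fun j => (g j)^2) :
    (∑' x : (Fin p → ℕ) × (Fin q → ℕ), ∑ m : Fin p, ∑ n : Fin q,
        (if x.1 m = x.2 n then ENNReal.ofReal ((f x.1)^2) * ENNReal.ofReal ((g x.2)^2) else 0))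
      ≤ ENNReal.ofReal ((p * q : ℝ) * ((∑' i, (f i)^2) * maxInfluence g)) := by
  rw [Summable.tsum_finsetSum (fun m _ => ENNReal.summable)]
  have hmn : ∀ (m : Fin p) (n : Fin q),
      (∑' x : (Fin p → ℕ) × (Fin q → ℕ),
        (if x.1 m = x.2 n then ENNReal.ofReal ((f x.1)^2) * ENNReal.ofReal ((g x.2)^2) else 0))
      ≤ ENNReal.ofReal (∑' i, (f i)^2) * ENNReal.ofReal (maxInfluence g) := by
    intro m n
    rw [ENNReal.tsum_prod']
    have hpt : ∀ a : Fin p → ℕ,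
        (∑' b : Fin q → ℕ,
          (if a m = b n then ENNReal.ofReal ((f a)^2) * ENNReal.ofReal ((g b)^2) else 0))
        ≤ ENNReal.ofReal ((f a)^2) * ENNReal.ofReal (maxInfluence g) := by
      intro a
      have : ∀ b : Fin q → ℕ,
          (if a m = b n then ENNReal.ofReal ((f a)^2) * ENNReal.ofReal ((g b)^2) else 0)
          = ENNReal.ofReal ((f a)^2) * (if b n = a m then ENNReal.ofReal ((g b)^2) else 0) := by
        intro b
        rw [mul_ite, mul_zero]
        exact if_congr eq_comm rfl rfl
      rw [tsum_congr this, ENNReal.tsum_mul_left]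
      exact mul_le_mul_right (slice_le g hg hgs n (a m)) _
    calc (∑' (a : Fin p → ℕ) (b : Fin q → ℕ),
          (if a m = b n then ENNReal.ofReal ((f a)^2) * ENNReal.ofReal ((g b)^2) else 0))
        ≤ ∑' a : Fin p → ℕ, ENNReal.ofReal ((f a)^2) * ENNReal.ofReal (maxInfluence g) :=
          Summable.tsum_le_tsum hpt ENNReal.summable ENNReal.summable
      _ = (∑' a : Fin p → ℕ, ENNReal.ofReal ((f a)^2)) * ENNReal.ofReal (maxInfluence g) :=
          ENNReal.tsum_mul_right
      _ = ENNReal.ofReal (∑' i, (f i)^2) * ENNReal.ofReal (maxInfluence g) := by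
          rw [ENNReal.ofReal_tsum_of_nonneg (fun i => sq_nonneg _) hfs]
  calc (∑ m : Fin p, ∑' x : (Fin p → ℕ) × (Fin q → ℕ), ∑ n : Fin q,
        (if x.1 m = x.2 n then ENNReal.ofReal ((f x.1)^2) * ENNReal.ofReal ((g x.2)^2) else 0))
      = ∑ m : Fin p, ∑ n : Fin q, ∑' x : (Fin p → ℕ) × (Fin q → ℕ),
        (if x.1 m = x.2 n then ENNReal.ofReal ((f x.1)^2) * ENNReal.ofReal ((g x.2)^2) else 0) := by
        exact Finset.sum_congr rfl fun m _ => Summable.tsum_finsetSum (fun n _ => ENNReal.summable)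
    _ ≤ ∑ m : Fin p, ∑ n : Fin q,
          ENNReal.ofReal (∑' i, (f i)^2) * ENNReal.ofReal (maxInfluence g) := by
        exact Finset.sum_le_sum fun m _ => Finset.sum_le_sum fun n _ => hmn m n
    _ = ENNReal.ofReal ((p * q : ℝ) * ((∑' i, (f i)^2) * maxInfluence g)) := by
        simp only [Finset.sum_const, Finset.card_univ, Fintype.card_fin, smul_smul, nsmul_eq_mul]
        rw [ENNReal.ofReal_mul (by positivity),
          ENNReal.ofReal_mul (tsum_nonneg fun i => sq_nonneg (f i)),
          ENNReal.ofReal_mul (by positivity : (0:ℝ) ≤ (p:ℝ)),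
          ENNReal.ofReal_natCast, ENNReal.ofReal_natCast]
        ring

private lemma append_injective {p q : ℕ} {a : Fin p → ℕ} {b : Fin q → ℕ}
    (ha : Injective a) (hb : Injective b) (hab : ∀ m n, a m ≠ b n) :
    Injective (Fin.append a b) := by
  have key : ∀ x y : Fin (p + q), Fin.append a b x = Fin.append a b y → x = y := by
    refine Fin.addCases (fun m => Fin.addCases (fun n h => ?_) (fun n h => ?_))
      (fun m => Fin.addCases (fun n h => ?_) (fun n h => ?_))
    · rw [Fin.append_left, Fin.append_left] at h
      exact congrArg _ (ha h)
    · rw [Fin.append_left, Fin.append_right] at h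
      exact absurd h (hab m n)
    · rw [Fin.append_right, Fin.append_left] at h
      exact absurd h.symm (hab n m)
    · rw [Fin.append_right, Fin.append_right] at h
      exact congrArg _ (hb h)
  exact fun x y => key x y
private noncomputable def joinE (p q : ℕ) : ((Fin p → ℕ) × (Fin q → ℕ)) ≃ (Fin (p+q) → ℕ) where
  toFun x := Fin.append x.1 x.2
  invFun i := (fun m => i (Fin.castAdd q m), fun n => i (Fin.natAdd p n))
  left_inv x := by
    obtain ⟨a, b⟩ := x
    refine Prod.ext ?_ ?_ <;> funext t <;>
      simp [Fin.append_left, Fin.append_right]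
  right_inv i := by
    funext x
    refine Fin.addCases (fun m => ?_) (fun n => ?_) x
    · exact Fin.append_left _ _ m
    · exact Fin.append_right _ _ n

private lemma symm_step {N : ℕ} (h : (Fin N → ℕ) → ℝ) :
    (∑' i : Fin N → ℕ, if ¬ Injective i then ENNReal.ofReal ((symmetrization h i)^2) else 0)
      ≤ ∑' i : Fin N → ℕ, if ¬ Injective i then ENNReal.ofReal ((h i)^2) else 0 := by
  set T := ∑' i : Fin N → ℕ, if ¬ Injective i then ENNReal.ofReal ((h i)^2) else 0 with hT
  have hfac : (0:ℝ) < (N.factorial : ℝ) := by positivity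
  have hpt : ∀ i : Fin N → ℕ, (symmetrization h i)^2
      ≤ (N.factorial : ℝ)⁻¹ * ∑ σ : Equiv.Perm (Fin N), (h (i ∘ σ))^2 := by
    intro i
    have hcs := sq_sum_le_card_mul_sum_sq (s := (Finset.univ : Finset (Equiv.Perm (Fin N))))
      (f := fun σ => h (i ∘ σ))
    rw [Finset.card_univ, Fintype.card_perm, Fintype.card_fin] at hcs
    have heq : (symmetrization h i)^2
        = ((N.factorial : ℝ)⁻¹)^2 * (∑ σ : Equiv.Perm (Fin N), h (i ∘ σ))^2 := by
      rw [symmetrization]; ring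
    rw [heq]
    calc ((N.factorial:ℝ)⁻¹)^2 * (∑ σ : Equiv.Perm (Fin N), h (i ∘ σ))^2
        ≤ ((N.factorial:ℝ)⁻¹)^2
            * ((N.factorial:ℝ) * ∑ σ : Equiv.Perm (Fin N), (h (i ∘ σ))^2) :=
          mul_le_mul_of_nonneg_left hcs (by positivity)
      _ = (N.factorial:ℝ)⁻¹ * ∑ σ : Equiv.Perm (Fin N), (h (i ∘ σ))^2 := by
          field_simp
  calc (∑' i : Fin N → ℕ, if ¬ Injective i then ENNReal.ofReal ((symmetrization h i)^2) else 0)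
      ≤ ∑' i : Fin N → ℕ, if ¬ Injective i then
          ENNReal.ofReal ((N.factorial:ℝ)⁻¹ * ∑ σ : Equiv.Perm (Fin N), (h (i ∘ σ))^2) else 0 := by
        refine Summable.tsum_le_tsum (fun i => ?_) ENNReal.summable ENNReal.summable
        by_cases hi : ¬ Injective i
        · rw [if_pos hi, if_pos hi]
          exact ENNReal.ofReal_le_ofReal (hpt i)
        · rw [if_neg hi, if_neg hi]
    _ = ∑' i : Fin N → ℕ, ENNReal.ofReal ((N.factorial:ℝ)⁻¹)
          * ∑ σ : Equiv.Perm (Fin N),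
            (if ¬ Injective i then ENNReal.ofReal ((h (i ∘ σ))^2) else 0) := by
        refine tsum_congr fun i => ?_
        by_cases hi : ¬ Injective i
        · rw [if_pos hi, ENNReal.ofReal_mul (by positivity),
            ENNReal.ofReal_sum_of_nonneg (fun σ _ => sq_nonneg _)]
          simp only [if_pos hi]
        · simp only [if_neg hi, Finset.sum_const_zero, mul_zero]
    _ = ENNReal.ofReal ((N.factorial:ℝ)⁻¹) * ∑ σ : Equiv.Perm (Fin N),
          ∑' i : Fin N → ℕ, (if ¬ Injective i then ENNReal.ofReal ((h (i ∘ σ))^2) else 0) := by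
        rw [ENNReal.tsum_mul_left, Summable.tsum_finsetSum (fun σ _ => ENNReal.summable)]
    _ = ENNReal.ofReal ((N.factorial:ℝ)⁻¹) * ∑ σ : Equiv.Perm (Fin N), T := by
        congr 1
        refine Finset.sum_congr rfl fun σ _ => ?_
        have hcomp : ∀ i : Fin N → ℕ,
            (if ¬ Injective i then ENNReal.ofReal ((h (i ∘ σ))^2) else 0)
            = (fun j => if ¬ Injective j then ENNReal.ofReal ((h j)^2) else 0) (i ∘ σ) := by
          intro i
          simp only
          refine if_congr ?_ rfl rfl
          rw [Equiv.injective_comp σ i]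
        rw [tsum_congr hcomp,
          tsum_comp_perm (fun j => if ¬ Injective j then ENNReal.ofReal ((h j)^2) else 0) σ]
    _ = T := by
        rw [Finset.sum_const, Finset.card_univ, Fintype.card_perm, Fintype.card_fin,
          nsmul_eq_mul, ← mul_assoc]
        have hone : ENNReal.ofReal ((N.factorial:ℝ)⁻¹) * (N.factorial : ℝ≥0∞) = 1 := by
          rw [ENNReal.ofReal_inv_of_pos hfac, ENNReal.ofReal_natCast]
          exact ENNReal.inv_mul_cancel
            (Nat.cast_ne_zero.mpr (Nat.factorial_pos N).ne') (ENNReal.natCast_ne_top _)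
        rw [hone, one_mul]

private lemma S_comm {p q : ℕ} (f : (Fin p → ℕ) → ℝ) (g : (Fin q → ℕ) → ℝ) :
    (∑' x : (Fin p → ℕ) × (Fin q → ℕ), ∑ m : Fin p, ∑ n : Fin q,
        (if x.1 m = x.2 n then ENNReal.ofReal ((f x.1)^2) * ENNReal.ofReal ((g x.2)^2) else 0))
    = (∑' y : (Fin q → ℕ) × (Fin p → ℕ), ∑ n : Fin q, ∑ m : Fin p,
        (if y.1 n = y.2 m then ENNReal.ofReal ((g y.1)^2) * ENNReal.ofReal ((f y.2)^2) else 0)) := by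
  rw [← (Equiv.prodComm (Fin p → ℕ) (Fin q → ℕ)).tsum_eq (fun y : (Fin q → ℕ) × (Fin p → ℕ) =>
    ∑ n : Fin q, ∑ m : Fin p,
      (if y.1 n = y.2 m then ENNReal.ofReal ((g y.1)^2) * ENNReal.ofReal ((f y.2)^2) else 0))]
  refine tsum_congr fun x => ?_
  rw [Finset.sum_comm]
  refine Finset.sum_congr rfl fun m _ => Finset.sum_congr rfl fun n _ => ?_
  simp only [Equiv.prodComm_apply, Prod.fst_swap, Prod.snd_swap]
  rw [mul_comm]
  exact if_congr eq_comm rfl rfl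
private lemma tensor_append {p q : ℕ} (f : (Fin p → ℕ) → ℝ) (g : (Fin q → ℕ) → ℝ)
    (a : Fin p → ℕ) (b : Fin q → ℕ) :
    tensorProd f g (Fin.append a b) = f a * g b := by
  rw [tensorProd]
  congr 1
  · exact congrArg f (funext fun m => Fin.append_left a b m)
  · exact congrArg g (funext fun n => Fin.append_right a b n)

/-- Influence bound for the off-diagonal part of the symmetrized tensor product. -/
theorem offdiag_symmetrized_tensor_le {p q : ℕ}
    (f : (Fin p → ℕ) → ℝ) (g : (Fin q → ℕ) → ℝ)
    (hf : IsSymm f) (hg : IsSymm g) (hfd : VanishOnDiag f) (hgd : VanishOnDiag g)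
    (hfs : Summable fun i => (f i) ^ 2) (hgs : Summable fun j => (g j) ^ 2) :
    (∑' i : Fin (p + q) → ℕ,
        (if ¬ Function.Injective i then symmetrization (tensorProd f g) i else 0) ^ 2)
      ≤ ∑ r ∈ Finset.Icc 1 (min p q), (r.factorial : ℝ) * (p.choose r : ℝ) * (q.choose r : ℝ) *
          min ((∑' i : Fin p → ℕ, (f i) ^ 2) * maxInfluence g)
              ((∑' j : Fin q → ℕ, (g j) ^ 2) * maxInfluence f) := by
  classical
  set A : ℝ := (∑' i : Fin p → ℕ, (f i) ^ 2) * maxInfluence g with hA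
  set B : ℝ := (∑' j : Fin q → ℕ, (g j) ^ 2) * maxInfluence f with hB
  have hA0 : 0 ≤ A := mul_nonneg (tsum_nonneg fun i => sq_nonneg _) (maxInfluence_nonneg g)
  have hB0 : 0 ≤ B := mul_nonneg (tsum_nonneg fun j => sq_nonneg _) (maxInfluence_nonneg f)
  have hmin0 : 0 ≤ min A B := le_min hA0 hB0
  set RHS : ℝ := ∑ r ∈ Finset.Icc 1 (min p q),
      (r.factorial : ℝ) * (p.choose r : ℝ) * (q.choose r : ℝ) * min A B with hRHS
  have hRHS0 : 0 ≤ RHS :=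
    Finset.sum_nonneg fun r _ => mul_nonneg (by positivity) hmin0
  set φ : (Fin (p+q) → ℕ) → ℝ :=
    fun i => (if ¬ Function.Injective i then symmetrization (tensorProd f g) i else 0) ^ 2 with hφ
  have hφ0 : ∀ i, 0 ≤ φ i := fun i => sq_nonneg _
  show ∑' i, φ i ≤ RHS
  by_cases hsum : Summable φ
  swap
  · rw [tsum_eq_zero_of_not_summable hsum]; exact hRHS0
  rw [← ENNReal.ofReal_le_ofReal_iff hRHS0, ENNReal.ofReal_tsum_of_nonneg hφ0 hsum]
  -- the middle quantity S
  set S : ℝ≥0∞ := ∑' x : (Fin p → ℕ) × (Fin q → ℕ), ∑ m : Fin p, ∑ n : Fin q,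
      (if x.1 m = x.2 n then ENNReal.ofReal ((f x.1)^2) * ENNReal.ofReal ((g x.2)^2) else 0)
    with hS
  have step3 : (∑' i : Fin (p+q) → ℕ,
      if ¬ Function.Injective i then ENNReal.ofReal ((tensorProd f g i)^2) else 0) ≤ S := by
    rw [← (joinE p q).tsum_eq (fun i => if ¬ Function.Injective i then
      ENNReal.ofReal ((tensorProd f g i)^2) else 0)]
    refine Summable.tsum_le_tsum (fun x => ?_) ENNReal.summable ENNReal.summable
    obtain ⟨a, b⟩ := x
    have hj : (joinE p q) (a, b) = Fin.append a b := rfl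
    rw [hj, tensor_append]
    by_cases hi : ¬ Function.Injective (Fin.append a b)
    swap
    · rw [if_neg hi]; exact zero_le
    rw [if_pos hi]
    have hval : ENNReal.ofReal ((f a * g b)^2)
        = ENNReal.ofReal ((f a)^2) * ENNReal.ofReal ((g b)^2) := by
      rw [mul_pow, ENNReal.ofReal_mul (sq_nonneg _)]
    rw [hval]
    by_cases hfa : f a = 0
    · simp [hfa]
    by_cases hgb : g b = 0
    · simp [hgb]
    have ha : Function.Injective a := by
      by_contra hna; exact hfa (hfd a hna)
    have hb : Function.Injective b := by
      by_contra hnb; exact hgb (hgd b hnb)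
    have hex : ∃ m n, a m = b n := by
      by_contra hne
      push_neg at hne
      exact hi (append_injective ha hb hne)
    obtain ⟨m, n, hmn⟩ := hex
    calc ENNReal.ofReal ((f a)^2) * ENNReal.ofReal ((g b)^2)
        = (if a m = b n then ENNReal.ofReal ((f a)^2) * ENNReal.ofReal ((g b)^2) else 0) :=
          (if_pos hmn).symm
      _ ≤ ∑ n' : Fin q,
            (if a m = b n' then ENNReal.ofReal ((f a)^2) * ENNReal.ofReal ((g b)^2) else 0) :=
          Finset.single_le_sum (f := fun n' : Fin q =>
            (if a m = b n' then ENNReal.ofReal ((f a)^2) * ENNReal.ofReal ((g b)^2) else 0))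
            (fun _ _ => zero_le) (Finset.mem_univ n)
      _ ≤ ∑ m' : Fin p, ∑ n' : Fin q,
            (if a m' = b n' then ENNReal.ofReal ((f a)^2) * ENNReal.ofReal ((g b)^2) else 0) :=
          Finset.single_le_sum (f := fun m' : Fin p => ∑ n' : Fin q,
            (if a m' = b n' then ENNReal.ofReal ((f a)^2) * ENNReal.ofReal ((g b)^2) else 0))
            (fun _ _ => zero_le) (Finset.mem_univ m)
  have hS1 : S ≤ ENNReal.ofReal ((p * q : ℝ) * A) := keybound f g hg hfs hgs
  have hS2 : S ≤ ENNReal.ofReal ((p * q : ℝ) * B) := by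
    rw [hS, S_comm f g]
    have := keybound g f hf hgs hfs
    refine this.trans (le_of_eq ?_)
    rw [hB]
    ring_nf
  have hSmin : S ≤ ENNReal.ofReal ((p * q : ℝ) * min A B) := by
    rcases min_cases A B with ⟨hm, _⟩ | ⟨hm, _⟩ <;> rw [hm]
    · exact hS1
    · exact hS2
  have hfinal : (p * q : ℝ) * min A B ≤ RHS := by
    rcases Nat.eq_zero_or_pos p with hp | hp
    · rw [hp]; simpa using hRHS0
    rcases Nat.eq_zero_or_pos q with hq | hq
    · rw [hq]; simpa using hRHS0
    have h1 : 1 ∈ Finset.Icc 1 (min p q) := by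
      rw [Finset.mem_Icc]
      omega
    have := Finset.single_le_sum
      (f := fun r : ℕ => (r.factorial : ℝ) * (p.choose r : ℝ) * (q.choose r : ℝ) * min A B)
      (fun r _ => mul_nonneg (by positivity) hmin0) h1
    rw [hRHS]
    refine le_trans (le_of_eq ?_) this
    simp [Nat.choose_one_right]
  calc (∑' i, ENNReal.ofReal (φ i))
      = ∑' i : Fin (p+q) → ℕ, (if ¬ Function.Injective i then
          ENNReal.ofReal ((symmetrization (tensorProd f g) i)^2) else 0) := by
        refine tsum_congr fun i => ?_
        by_cases hi : ¬ Function.Injective i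
        · rw [hφ]; simp only [if_pos hi]
        · rw [hφ]; simp only [if_neg hi]
          norm_num
    _ ≤ ∑' i : Fin (p+q) → ℕ, (if ¬ Function.Injective i then
          ENNReal.ofReal ((tensorProd f g i)^2) else 0) := symm_step (tensorProd f g)
    _ ≤ S := step3
    _ ≤ ENNReal.ofReal ((p * q : ℝ) * min A B) := hSmin
    _ ≤ ENNReal.ofReal RHS := ENNReal.ofReal_le_ofReal hfinal

end RademacherPT
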